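/- Two distinct points p, q in the plane cannot be encapsulated by only two convex sets; at least 3 convex sets avoiding {p,q} are required to cover punctured neighborhoods of both p and q. -/

import Mathlib

/-- Two distinct points of the plane cannot be encapsulated by two convex sets. -/
theorem stmt_1 (p q : ℝ × ℝ) (hpq : p ≠ q) (K : Fin 2 → Set (ℝ × ℝ))
    (hconv : ∀ i, Convex ℝ (K i))
    (hdisj : ∀ i, K i ⊆ ({p, q} : Set (ℝ × ℝ))ᶜ)
    (henc : ∀ r ∈ ({p, q} : Set (ℝ × ℝ)),
      ∃ N ∈ nhds r, (⋃ i, K i) ∩ N = N \ {r}) : False := by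
  obtain ⟨Np, hNp, hNpEq⟩ := henc p (Or.inl rfl)
  obtain ⟨Nq, hNq, hNqEq⟩ := henc q (Or.inr rfl)
  obtain ⟨δp, hδp, hballp⟩ := Metric.mem_nhds_iff.mp hNp
  obtain ⟨δq, hδq, hballq⟩ := Metric.mem_nhds_iff.mp hNq
  set v : ℝ × ℝ := q - p with hv
  have hvne : v ≠ 0 := sub_ne_zero.mpr hpq.symm
  have hvnorm : (0:ℝ) < ‖v‖ := norm_pos_iff.mpr hvne
  set ε : ℝ := min (1/2) (min δp δq / (2 * ‖v‖)) with hε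
  have hε0 : 0 < ε := by
    apply lt_min (by norm_num)
    positivity
  have hε1 : ε < 1 := lt_of_le_of_lt (min_le_left _ _) (by norm_num)
  have hεv : ε * ‖v‖ < min δp δq := by
    have h1 : ε ≤ min δp δq / (2 * ‖v‖) := min_le_right _ _
    have h2 : ε * ‖v‖ ≤ min δp δq / 2 := by
      rw [div_mul_eq_div_div] at h1
      calc ε * ‖v‖ ≤ (min δp δq / 2 / ‖v‖) * ‖v‖ := by
            exact mul_le_mul_of_nonneg_right h1 (le_of_lt hvnorm)
        _ = min δp δq / 2 := div_mul_cancel₀ _ (ne_of_gt hvnorm)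
    have h3 : 0 < min δp δq := lt_min hδp hδq
    linarith
  have hεp : ε * ‖v‖ < δp := lt_of_lt_of_le hεv (min_le_left _ _)
  have hεq : ε * ‖v‖ < δq := lt_of_lt_of_le hεv (min_le_right _ _)
  set a : ℝ × ℝ := p - ε • v with ha
  set m : ℝ × ℝ := p + ε • v with hm
  set b : ℝ × ℝ := q + ε • v with hb
  have hnormεv : ‖ε • v‖ = ε * ‖v‖ := by
    rw [norm_smul, Real.norm_eq_abs, abs_of_pos hε0]
  have hεvne : ε • v ≠ 0 := smul_ne_zero (ne_of_gt hε0) hvne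
  -- memberships in neighborhoods
  have haNp : a ∈ Np := by
    apply hballp
    simp only [Metric.mem_ball, dist_eq_norm, ha]
    rw [sub_sub_cancel_left, norm_neg, hnormεv]; exact hεp
  have hmNp : m ∈ Np := by
    apply hballp
    simp only [Metric.mem_ball, dist_eq_norm, hm]
    rw [add_sub_cancel_left, hnormεv]; exact hεp
  have hbNq : b ∈ Nq := by
    apply hballq
    simp only [Metric.mem_ball, dist_eq_norm, hb]
    rw [add_sub_cancel_left, hnormεv]; exact hεq
  have hap : a ≠ p := by
    intro h; apply hεvne
    have h2 : ε • v = p - a := by rw [ha]; module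
    rw [h2, h, sub_self]
  have hmp : m ≠ p := by
    intro h; apply hεvne
    have h2 : ε • v = m - p := by rw [hm]; module
    rw [h2, h, sub_self]
  have hbq : b ≠ q := by
    intro h; apply hεvne
    have h2 : ε • v = b - q := by rw [hb]; module
    rw [h2, h, sub_self]
  -- get indices
  have haK : a ∈ ⋃ i, K i := by
    have : a ∈ Np \ {p} := ⟨haNp, hap⟩
    rw [← hNpEq] at this; exact this.1
  have hmK : m ∈ ⋃ i, K i := by
    have : m ∈ Np \ {p} := ⟨hmNp, hmp⟩
    rw [← hNpEq] at this; exact this.1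
  have hbK : b ∈ ⋃ i, K i := by
    have : b ∈ Nq \ {q} := ⟨hbNq, hbq⟩
    rw [← hNqEq] at this; exact this.1
  obtain ⟨i, hai⟩ := Set.mem_iUnion.mp haK
  obtain ⟨k, hmk⟩ := Set.mem_iUnion.mp hmK
  obtain ⟨j, hbj⟩ := Set.mem_iUnion.mp hbK
  have hbv : b = p + (1 + ε) • v := by rw [hb, hv]; module
  -- i ≠ k : p is midpoint of a and m
  have hik : i ≠ k := by
    intro h; subst h
    have hpmem : p ∈ K i := by
      have := hconv i hai hmk (by norm_num : (0:ℝ) ≤ 1/2) (by norm_num : (0:ℝ) ≤ 1/2) (by norm_num)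
      have hpeq : (1/2 : ℝ) • a + (1/2 : ℝ) • m = p := by rw [ha, hm]; module
      rwa [hpeq] at this
    exact hdisj i hpmem (Or.inl rfl)
  -- k ≠ j : q is between m and b
  have hkj : k ≠ j := by
    intro h; subst h
    have hqmem : q ∈ K k := by
      have := hconv k hmk hbj (by linarith : (0:ℝ) ≤ ε) (by linarith : (0:ℝ) ≤ 1 - ε)
        (by ring : ε + (1 - ε) = 1)
      have hqeq : ε • m + (1 - ε) • b = q := by
        rw [hm, hbv, hv]; module
      rwa [hqeq] at this
    exact hdisj k hqmem (Or.inr rfl)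
  -- i ≠ j : p is between a and b
  have hij : i ≠ j := by
    intro h; subst h
    set c : ℝ := 1 + 2 * ε with hc
    have hc0 : 0 < c := by rw [hc]; linarith
    set t : ℝ := ε / c with ht
    have ht0 : 0 ≤ t := le_of_lt (div_pos hε0 hc0)
    have ht1 : t ≤ 1 := by
      rw [ht, div_le_one hc0, hc]; linarith
    have hpmem : p ∈ K i := by
      have := hconv i hai hbj (by linarith : (0:ℝ) ≤ 1 - t) ht0 (by ring : (1 - t) + t = 1)
      have hpeq : (1 - t) • a + t • b = p + (t * c - ε) • v := by
        rw [ha, hbv, hc]; module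
      have htc : t * c - ε = 0 := by
        rw [ht]; field_simp; ring
      rw [hpeq, htc, zero_smul, add_zero] at this
      exact this
    exact hdisj i hpmem (Or.inl rfl)
  -- three pairwise distinct elements of Fin 2 : contradiction
  omega
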